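/- Let R be a commutative ring of characteristic p. The Witt vector Frobenius F: W(R) → W(R) is injective if and only if R is reduced. -/

import Mathlib

theorem stmt_7 (p : ℕ) [Fact p.Prime] (R : Type*) [CommRing R] [CharP R p] :
    Function.Injective
        (WittVector.frobenius : WittVector p R →+* WittVector p R) ↔
      IsReduced R := by
  have hp : p ≠ 0 := (Fact.out : p.Prime).ne_zero
  constructor
  · intro hF
    have key : ∀ r : R, r ^ p = 0 → r = 0 := by
      intro r hr
      have h : WittVector.frobenius (WittVector.mk p (fun n => if n = 0 then r else 0))
          = WittVector.frobenius (0 : WittVector p R) := by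
        ext n
        rw [WittVector.coeff_frobenius_charP, WittVector.coeff_frobenius_charP,
          WittVector.zero_coeff, WittVector.coeff_mk]
        rcases eq_or_ne n 0 with h0 | h0 <;> simp [h0, hr, zero_pow hp]
      have h2 := hF h
      have := congrArg (fun z : WittVector p R => z.coeff 0) h2
      simpa [WittVector.coeff_mk, WittVector.zero_coeff] using this
    constructor
    intro r hr
    obtain ⟨n, hn⟩ := hr
    have hpow : r ^ p ^ n = 0 := by
      have hle : n ≤ p ^ n := le_of_lt (Nat.lt_pow_self (n := n) (Fact.out : p.Prime).one_lt)
      calc r ^ p ^ n = r ^ n * r ^ (p ^ n - n) := by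
            rw [← pow_add]; congr 1; omega
        _ = 0 := by rw [hn, zero_mul]
    clear hn
    induction n with
    | zero => simpa using hpow
    | succ k ih =>
      apply ih
      apply key
      rw [← pow_mul]
      rw [pow_succ] at hpow
      rw [mul_comm] at hpow ⊢
      exact hpow
  · intro hR x y h
    ext n
    have hc := congrArg (fun z : WittVector p R => z.coeff n) h
    simp only [WittVector.coeff_frobenius_charP] at hc
    have : frobenius R p (x.coeff n) = frobenius R p (y.coeff n) := by
      simpa [frobenius_def] using hc
    exact frobenius_inj R p this
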